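/- The graph G' output by the greedy (2k-1)-spanner algorithm (with edges sorted in nondecreasing weight order) has girth greater than 2k; that is, G' contains no cycle with at most 2k edges. -/

import Mathlib

open scoped ENNReal Classical

variable {V : Type*}

/-- The total weight of a walk: the sum of the weights of its (directed) edges. -/
noncomputable def walkWeight (w : V → V → ℝ≥0∞) {G : SimpleGraph V} {u v : V}
    (p : G.Walk u v) : ℝ≥0∞ :=
  (p.darts.map (fun d => w d.toProd.1 d.toProd.2)).sum

/-- Weighted shortest-path distance: the infimum of walk weights (`⊤` if unreachable). -/
noncomputable def wdist (G : SimpleGraph V) (w : V → V → ℝ≥0∞) (u v : V) : ℝ≥0∞ :=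
  ⨅ p : G.Walk u v, walkWeight w p

/-- One greedy pass: process the edges in the given list order, adding an edge whenever the
current spanner distance between its endpoints exceeds `t` times its weight. -/
noncomputable def greedyAux (w : V → V → ℝ≥0∞) (t : ℝ≥0∞) :
    List (V × V) → SimpleGraph V → SimpleGraph V
  | [], G' => G'
  | e :: rest, G' =>
      greedyAux w t rest
        (if t * w e.1 e.2 < wdist G' w e.1 e.2
          then G' ⊔ SimpleGraph.fromEdgeSet {s(e.1, e.2)} else G')

open SimpleGraph

lemma wdist_le {G : SimpleGraph V} (w : V → V → ℝ≥0∞) {u v : V} (p : G.Walk u v) :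
    wdist G w u v ≤ walkWeight w p :=
  iInf_le _ p

lemma walkWeight_transfer {G H : SimpleGraph V} (w : V → V → ℝ≥0∞) {u v : V}
    (p : G.Walk u v) (hp : ∀ e ∈ p.edges, e ∈ H.edgeSet) :
    walkWeight w (p.transfer H hp) = walkWeight w p := by
  induction p with
  | nil => rfl
  | cons h q ih =>
    simp only [Walk.transfer, walkWeight, Walk.darts_cons, List.map_cons, List.sum_cons] at ih ⊢
    exact congrArg (w _ _ + ·) (ih _)

lemma walkWeight_le_length_mul {G : SimpleGraph V} (w : V → V → ℝ≥0∞) {u v : V}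
    (p : G.Walk u v) (W : ℝ≥0∞)
    (h : ∀ d ∈ p.darts, w d.toProd.1 d.toProd.2 ≤ W) :
    walkWeight w p ≤ p.length * W := by
  calc walkWeight w p ≤ (p.darts.map (fun d => w d.toProd.1 d.toProd.2)).length • W :=
        List.sum_le_card_nsmul _ _ (by simpa using h)
    _ = p.length * W := by simp [nsmul_eq_mul]

lemma length_rotate {G : SimpleGraph V} {u v : V} (c : G.Walk v v) (h : u ∈ c.support) :
    (c.rotate u h).length = c.length := by
  have h1 := congrArg Walk.length (c.take_spec h)
  rw [Walk.length_append] at h1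
  rw [Walk.rotate, Walk.length_append]
  omega

lemma greedyAux_cycle_long (w : V → V → ℝ≥0∞) (hsymm : ∀ u v, w u v = w v u)
    (k : ℕ) (hk : 1 ≤ k) (l : List (V × V)) (G' : SimpleGraph V)
    (hsort : (l.map (fun e => w e.1 e.2)).Pairwise (· ≤ ·))
    (hB : ∀ a b : V, G'.Adj a b → ∀ e ∈ l, w a b ≤ w e.1 e.2)
    (hA : ∀ (a : V) (c : G'.Walk a a), c.IsCycle → 2 * k < c.length) :
    ∀ (a : V) (c : (greedyAux w ((2 * k - 1 : ℕ) : ℝ≥0∞) l G').Walk a a),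
      c.IsCycle → 2 * k < c.length := by
  induction l generalizing G' with
  | nil => simpa [greedyAux] using hA
  | cons e rest ih =>
    obtain ⟨u, v⟩ := e
    rw [greedyAux]
    rw [List.map_cons, List.pairwise_cons] at hsort
    by_cases hcond : ((2 * k - 1 : ℕ) : ℝ≥0∞) * w (u, v).1 (u, v).2 <
        wdist G' w (u, v).1 (u, v).2
    · rw [if_pos hcond]
      simp only at hcond
      set W := w u v with hW
      -- u ≠ v
      have hne : u ≠ v := by
        rintro rfl
        have h0 : wdist G' w u u ≤ 0 := by
          simpa [walkWeight] using wdist_le (G := G') w (Walk.nil : G'.Walk u u)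
        exact absurd (lt_of_lt_of_le hcond h0) (by simp)
      set G'' := G' ⊔ SimpleGraph.fromEdgeSet {s(u, v)} with hG''
      have hedge : ∀ f ∈ G''.edgeSet, f ∈ G'.edgeSet ∨ f = s(u, v) := by
        intro f hf
        rw [hG'', edgeSet_sup, edgeSet_fromEdgeSet] at hf
        rcases hf with hf | hf
        · exact Or.inl hf
        · exact Or.inr hf.1
      -- new invariant A
      have hA'' : ∀ (a : V) (c : G''.Walk a a), c.IsCycle → 2 * k < c.length := by
        intro a c hc
        by_contra hlen
        push_neg at hlen
        by_cases hmem : s(u, v) ∈ c.edges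
        · -- rotate to u
          have hu : u ∈ c.support := c.fst_mem_support_of_mem_edges hmem
          set c' := c.rotate u hu with hc'def
          have hc' : c'.IsCycle := hc.rotate hu
          have hlen' : c'.length ≤ 2 * k := by rw [hc'def, length_rotate]; exact hlen
          have hmem' : s(u, v) ∈ c'.edges :=
            ((c.rotate_edges u hu).perm.mem_iff).2 hmem
          have hv : v ∈ c'.support := c'.snd_mem_support_of_mem_edges hmem'
          set p1 := c'.takeUntil v hv with hp1
          set p2 := c'.dropUntil v hv with hp2
          have hspec : p1.append p2 = c' := c'.take_spec hv
          have hedges : c'.edges = p1.edges ++ p2.edges := by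
            rw [← hspec, Walk.edges_append]
          have hnodup : (p1.edges ++ p2.edges).Nodup := by
            rw [← hedges]; exact hc'.isTrail.edges_nodup
          have hlensum : p1.length + p2.length = c'.length := by
            have := congrArg Walk.length hspec
            rwa [Walk.length_append] at this
          have hdisj : ∀ f ∈ p1.edges, f ∉ p2.edges :=
            fun f hf1 hf2 => (List.disjoint_of_nodup_append hnodup) hf1 hf2
          -- obtain a walk q : u → v in G'' avoiding s(u,v), of length ≤ 2k-1
          obtain ⟨q, hqavoid, hqlen⟩ :
              ∃ q : G''.Walk u v, (s(u, v) ∉ q.edges) ∧ q.length ≤ 2 * k - 1 := by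
            have : s(u, v) ∈ p1.edges ∨ s(u, v) ∈ p2.edges := by
              rw [← List.mem_append, ← hedges]; exact hmem'
            rcases this with h1 | h2
            · refine ⟨p2.reverse, ?_, ?_⟩
              · rw [Walk.edges_reverse, List.mem_reverse]
                exact hdisj _ h1
              · have hp1pos : 1 ≤ p1.length := by
                  have h0 : 0 < p1.edges.length :=
                    List.length_pos_iff.mpr (List.ne_nil_of_mem h1)
                  rw [p1.length_edges] at h0
                  omega
                rw [Walk.length_reverse]
                omega
            · refine ⟨p1, fun hin => hdisj _ hin h2, ?_⟩
              have hp2pos : 1 ≤ p2.length := by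
                have h0 : 0 < p2.edges.length :=
                  List.length_pos_iff.mpr (List.ne_nil_of_mem h2)
                rw [p2.length_edges] at h0
                omega
              omega
          -- transfer q into G'
          have hqG' : ∀ f ∈ q.edges, f ∈ G'.edgeSet := by
            intro f hf
            rcases hedge f (q.edges_subset_edgeSet hf) with h | h
            · exact h
            · exact absurd (h ▸ hf) hqavoid
          set q' := q.transfer G' hqG' with hq'
          have hwq : walkWeight w q' = walkWeight w q := walkWeight_transfer w q hqG'
          have hwle : walkWeight w q' ≤ q'.length * W := by
            apply walkWeight_le_length_mul
            intro d _
            exact hB d.toProd.1 d.toProd.2 d.adj (u, v) List.mem_cons_self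
          have hlenle : (q'.length : ℝ≥0∞) ≤ ((2 * k - 1 : ℕ) : ℝ≥0∞) := by
            rw [hq', Walk.length_transfer]
            exact_mod_cast hqlen
          have : wdist G' w u v ≤ ((2 * k - 1 : ℕ) : ℝ≥0∞) * W :=
            le_trans (wdist_le w q') (le_trans hwle (mul_le_mul_left hlenle W))
          exact absurd (lt_of_lt_of_le hcond this) (lt_irrefl _)
        · -- cycle avoids the new edge, so it lives in G'
          have hcG' : ∀ f ∈ c.edges, f ∈ G'.edgeSet := by
            intro f hf
            rcases hedge f (c.edges_subset_edgeSet hf) with h | h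
            · exact h
            · exact absurd (h ▸ hf) hmem
          have := hA a (c.transfer G' hcG') (hc.transfer hcG')
          rw [Walk.length_transfer] at this
          omega
      -- new invariant B
      have hB'' : ∀ a b : V, G''.Adj a b → ∀ f ∈ rest, w a b ≤ w f.1 f.2 := by
        intro a b hab f hf
        rw [hG'', sup_adj, fromEdgeSet_adj] at hab
        rcases hab with hab | ⟨hab, -⟩
        · exact hB a b hab f (List.mem_cons_of_mem _ hf)
        · rw [Set.mem_singleton_iff, Sym2.eq_iff] at hab
          have hw : w a b = W := by
            rcases hab with ⟨rfl, rfl⟩ | ⟨rfl, rfl⟩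
            · rfl
            · exact hsymm _ _
          rw [hw]
          exact hsort.1 _ (List.mem_map_of_mem hf)
      exact ih G'' hsort.2 hB'' hA''
    · rw [if_neg hcond]
      exact ih G' hsort.2 (fun a b hab f hf => hB a b hab f (List.mem_cons_of_mem _ hf)) hA

/-- The graph output by the greedy `(2k-1)`-spanner algorithm, with the edges processed in
nondecreasing order of weight, has girth greater than `2k`: it contains no cycle with at
most `2k` edges. -/
theorem greedy_girth [Fintype V]
    (G : SimpleGraph V) (hconn : G.Connected)
    (w : V → V → ℝ≥0∞) (hsymm : ∀ u v, w u v = w v u)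
    (hpos : ∀ u v, G.Adj u v → 0 < w u v) (hfin : ∀ u v, G.Adj u v → w u v ≠ ⊤)
    (k : ℕ) (hk : 1 ≤ k)
    (l : List (V × V))
    (hl₁ : ∀ e ∈ l, G.Adj e.1 e.2)
    (hl₂ : ∀ u v : V, G.Adj u v → (u, v) ∈ l ∨ (v, u) ∈ l)
    (hsorted : (l.map (fun e => w e.1 e.2)).Pairwise (· ≤ ·)) :
    (2 * k : ℕ∞) < (greedyAux w ((2 * k - 1 : ℕ) : ℝ≥0∞) l ⊥).egirth := by
  have key := greedyAux_cycle_long w hsymm k hk l ⊥ hsorted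
    (fun a b hab => absurd hab (by simp))
    (fun a c hc => by
      cases c with
      | nil => exact absurd hc.ne_nil (by simp)
      | cons h _ => exact absurd h (by simp))
  have h1 : ((2 * k + 1 : ℕ) : ℕ∞) ≤ (greedyAux w ((2 * k - 1 : ℕ) : ℝ≥0∞) l ⊥).egirth := by
    rw [SimpleGraph.le_egirth]
    intro a c hc
    have := key a c hc
    exact_mod_cast this
  calc (2 * k : ℕ∞) < ((2 * k + 1 : ℕ) : ℕ∞) := by exact_mod_cast Nat.lt_succ_self _
    _ ≤ _ := h1
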